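/- Under Hypothesis (H), the rational function f = P/Q admits a telescoper of order at most d_y* = deg_y(Q*): there exist η_0, …, η_ρ in k(x), not all zero, with ρ ≤ d_y*, and g in k(x,y), such that Σ_{i=0}^{ρ} η_i·D_x^i(f) = D_y(g). In particular, every minimal telescoper for f has order at most d_y*. -/

import Mathlib

open Polynomial

noncomputable section

/-- A map is a derivation: it is additive and satisfies the Leibniz rule. -/
def IsDeriv {F : Type*} [CommRing F] (D : F → F) : Prop :=
  (∀ a b, D (a + b) = D a + D b) ∧ ∀ a b, D (a * b) = a * D b + b * D a

/-- Degree in `x` of an element of `k[x][y]` (inner variable `x`, outer variable `y`). -/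
def degX {k : Type*} [Field k] (Q : Polynomial (Polynomial k)) : ℕ :=
  Q.support.sup fun i => (Q.coeff i).natDegree

/-- Partial derivative with respect to `x` on `k[x][y]`. -/
def derivX {k : Type*} [Field k] (Q : Polynomial (Polynomial k)) : Polynomial (Polynomial k) :=
  Q.sum fun i a => Polynomial.C (Polynomial.derivative a) * Polynomial.X ^ i

/-- The embedding `k[x][y] → k(x)(y)`. -/
def toF {k : Type*} [Field k] : Polynomial (Polynomial k) →+* RatFunc (RatFunc k) :=
  (algebraMap (Polynomial (RatFunc k)) (RatFunc (RatFunc k))).comp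
    (Polynomial.mapRingHom (algebraMap (Polynomial k) (RatFunc k)))

/-- The embedding `k(x) → k(x)(y)`. -/
def ratToF {k : Type*} [Field k] : RatFunc k →+* RatFunc (RatFunc k) :=
  (algebraMap (Polynomial (RatFunc k)) (RatFunc (RatFunc k))).comp
    (Polynomial.C : RatFunc k →+* Polynomial (RatFunc k))

/-- The embedding `k(x)[y] → k(x)(y)`. -/
def kyToF {k : Type*} [Field k] : Polynomial (RatFunc k) →+* RatFunc (RatFunc k) :=
  algebraMap (Polynomial (RatFunc k)) (RatFunc (RatFunc k))

/-- The embedding `k[x][y] → k(x)[y]`. -/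
def toKy {k : Type*} [Field k] : Polynomial (Polynomial k) →+* Polynomial (RatFunc k) :=
  Polynomial.mapRingHom (algebraMap (Polynomial k) (RatFunc k))

/-- The embedding `k[y] → k[x][y]` (a polynomial in `y` viewed in `k[x][y]`). -/
def yToXY {k : Type*} [Field k] : Polynomial k →+* Polynomial (Polynomial k) :=
  Polynomial.mapRingHom (Polynomial.C : k →+* Polynomial k)

/-- The Hermite matrix associated with a factorisation `Q = Qs * Qneg`, with respect to the
monomial bases: its columns are the coefficient vectors (in `y`, coefficients in `k[x]`) of
`Qs * D_y(y^j) - E * y^j` for `j < dm` (where `E = Qs * D_y(Qneg) / Qneg`) and of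
`Qneg * y^j` for `j < dy - dm`. -/
def hermiteMat {k : Type*} [Field k] (Qs Qneg E : Polynomial (Polynomial k)) (dy dm : ℕ) :
    Matrix (Fin dy) (Fin dy) (Polynomial k) :=
  Matrix.of fun i j =>
    if (j : ℕ) < dm then
      (Qs * Polynomial.derivative (Polynomial.X ^ (j : ℕ)) - E * Polynomial.X ^ (j : ℕ)).coeff i
    else
      (Qneg * Polynomial.X ^ ((j : ℕ) - dm)).coeff i

section DerivLemmas

variable {K : Type*} [Field K] {D : K → K}

lemma IsDeriv.zero' (hD : IsDeriv D) : D 0 = 0 := by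
  have h := hD.1 0 0
  rw [add_zero] at h
  exact add_eq_left.mp h.symm

lemma IsDeriv.one' (hD : IsDeriv D) : D 1 = 0 := by
  have h := hD.2 1 1
  rw [mul_one, one_mul] at h
  exact add_eq_left.mp h.symm

lemma IsDeriv.neg' (hD : IsDeriv D) (a : K) : D (-a) = -D a := by
  have h := hD.1 a (-a)
  rw [add_neg_cancel, hD.zero'] at h
  exact eq_neg_of_add_eq_zero_right h.symm

lemma IsDeriv.sub' (hD : IsDeriv D) (a b : K) : D (a - b) = D a - D b := by
  rw [sub_eq_add_neg, hD.1, hD.neg' b, sub_eq_add_neg]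

lemma IsDeriv.pow' (hD : IsDeriv D) (a : K) (n : ℕ) :
    D (a ^ (n + 1)) = (n + 1 : K) * a ^ n * D a := by
  induction n with
  | zero => simp [pow_one]
  | succ n ih =>
    have h : a ^ (n + 2) = a * a ^ (n + 1) := by ring
    rw [h, hD.2, ih]
    push_cast
    ring

lemma IsDeriv.div' (hD : IsDeriv D) (u v : K) (hv : v ≠ 0) :
    D (u / v) = (D u * v - u * D v) / v ^ 2 := by
  have h1 : u / v * v = u := div_mul_cancel₀ u hv
  have h2 := hD.2 (u / v) v
  rw [h1] at h2
  have h3 : v * D (u / v) = D u - u / v * D v := eq_sub_of_add_eq' h2.symm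
  have h4 : D (u / v) = (D u - u / v * D v) / v := by
    rw [eq_div_iff hv]; linear_combination h3
  rw [h4]
  field_simp

lemma IsDeriv.sum' (hD : IsDeriv D) {ι : Type*} (s : Finset ι) (f : ι → K) :
    D (∑ i ∈ s, f i) = ∑ i ∈ s, D (f i) := by
  classical
  induction s using Finset.induction with
  | empty => simp [hD.zero']
  | insert _ _ h ih => rw [Finset.sum_insert h, hD.1, ih, Finset.sum_insert h]

lemma exists_antideriv {F : Type*} [Field F] [CharZero F] (A : Polynomial F) :
    ∃ B : Polynomial F, derivative B = A := by
  induction A using Polynomial.induction_on' with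
  | add p q hp hq =>
    obtain ⟨P, hP⟩ := hp
    obtain ⟨Q, hQ⟩ := hq
    exact ⟨P + Q, by rw [derivative_add, hP, hQ]⟩
  | monomial n a =>
    refine ⟨C (a / (n + 1)) * X ^ (n + 1), ?_⟩
    rw [derivative_C_mul_X_pow]
    push_cast
    rw [div_mul_cancel₀ a (Nat.cast_add_one_ne_zero n), C_mul_X_pow_eq_monomial]

end DerivLemmas

section Gauss

open scoped nonZeroDivisors

variable {R K : Type*} [CommRing R] [IsDomain R] [NormalizedGCDMonoid R]
  [Field K] [Algebra R K] [IsFractionRing R K]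

lemma squarefree_map_fraction {p : Polynomial R} (hp : p.IsPrimitive) (hsq : Squarefree p) :
    Squarefree (p.map (algebraMap R K)) := by
  intro d hd
  by_contra hu
  have hp0 : p ≠ 0 := hp.ne_zero
  have hinj : Function.Injective (algebraMap R K) := IsFractionRing.injective R K
  have hmap0 : p.map (algebraMap R K) ≠ 0 := fun h => hp0 (Polynomial.map_injective _ hinj (by simpa using h))
  have hd0 : d ≠ 0 := by
    rintro rfl
    exact hmap0 (zero_dvd_iff.mp (by simpa using hd))
  set n : Polynomial R := IsLocalization.integerNormalization R⁰ d with hn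
  obtain ⟨c, hc⟩ := IsLocalization.integerNormalization_map_to_map R⁰ d
  have hcK : algebraMap R K (c : R) ≠ 0 := fun h =>
    nonZeroDivisors.coe_ne_zero c (hinj (by simpa using h))
  set e : Polynomial R := n.primPart with he
  have hen : e ∣ n := n.primPart_dvd
  have hmape : e.map (algebraMap R K) ∣ Polynomial.C (algebraMap R K (c : R)) * d := by
    have : n.map (algebraMap R K) = Polynomial.C (algebraMap R K (c : R)) * d := by
      rw [hc]
      rw [Algebra.smul_def]
      simp [Polynomial.algebraMap_apply]
    rw [← this]
    exact Polynomial.map_dvd _ hen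
  have hdvd : (e * e).map (algebraMap R K) ∣
      Polynomial.C ((algebraMap R K (c : R)) * (algebraMap R K (c : R))) * p.map (algebraMap R K) := by
    rw [Polynomial.map_mul, map_mul]
    calc e.map (algebraMap R K) * e.map (algebraMap R K)
        ∣ (Polynomial.C (algebraMap R K (c : R)) * d) * (Polynomial.C (algebraMap R K (c : R)) * d) :=
          mul_dvd_mul hmape hmape
      _ = Polynomial.C (algebraMap R K (c : R)) * Polynomial.C (algebraMap R K (c : R)) * (d * d) := by ring
      _ ∣ _ := mul_dvd_mul_left _ hd
  have hCunit : IsUnit (Polynomial.C ((algebraMap R K (c : R)) * (algebraMap R K (c : R)))) :=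
    Polynomial.isUnit_C.mpr ((mul_ne_zero hcK hcK)).isUnit
  have hdvd2 : (e * e).map (algebraMap R K) ∣ p.map (algebraMap R K) :=
    (IsUnit.dvd_mul_left hCunit).mp hdvd
  have hee : e * e ∣ p :=
    Polynomial.IsPrimitive.dvd_of_fraction_map_dvd_fraction_map
      (n.isPrimitive_primPart.mul n.isPrimitive_primPart) hdvd2
  have heu : IsUnit e := hsq e hee
  exact hu (Polynomial.isUnit_or_eq_zero_of_isUnit_integerNormalization_primPart hd0 heu)

end Gauss

section Hermite

variable {F K : Type*} [Field F] [CharZero F] [Field K]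

lemma hermite_reduction (φ : Polynomial F →+* K) (hφ : Function.Injective φ)
    (D : K → K) (hD : IsDeriv D) (hDφ : ∀ A, D (φ A) = φ (derivative A))
    (B : Polynomial F) (hB : IsCoprime B (derivative B)) (hBd : 0 < B.natDegree) :
    ∀ (n : ℕ) (A : Polynomial F), ∃ (r : Polynomial F) (g : K),
      r.natDegree < B.natDegree ∧ φ A / φ (B ^ n) = φ r / φ B + D g := by
  have hB0 : B ≠ 0 := fun h => by simp [h] at hBd
  have hφ0 : ∀ p : Polynomial F, p ≠ 0 → φ p ≠ 0 := fun p hp h =>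
    hp (hφ (by rwa [map_zero]))
  have hφB : φ B ≠ 0 := hφ0 B hB0
  intro n
  induction n with
  | zero =>
    intro A
    obtain ⟨A₀, hA₀⟩ := exists_antideriv A
    exact ⟨0, φ A₀, hBd, by simp [hDφ, hA₀]⟩
  | succ n ih =>
    intro A
    rcases Nat.eq_zero_or_pos n with hn | hn
    · subst hn
      set B' := B * C B.leadingCoeff⁻¹ with hB'def
      have hmon : B'.Monic := monic_mul_leadingCoeff_inv hB0
      obtain ⟨G, hG⟩ := exists_antideriv (C B.leadingCoeff⁻¹ * (A /ₘ B'))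
      refine ⟨A %ₘ B', φ G, ?_, ?_⟩
      · rcases eq_or_ne (A %ₘ B') 0 with h | h
        · simpa [h] using hBd
        · have hlt := degree_modByMonic_lt A hmon
          have hdeg : B'.degree = B.degree :=
            degree_mul_C (inv_ne_zero (leadingCoeff_ne_zero.mpr hB0))
          exact natDegree_lt_natDegree h (by rwa [hdeg] at hlt)
      · have hmod := modByMonic_add_div A B'
        have hDG : D (φ G) = φ (C B.leadingCoeff⁻¹ * (A /ₘ B')) := by rw [hDφ, hG]
        rw [pow_one, hDG]
        have hA : A = A %ₘ B' + B * (C B.leadingCoeff⁻¹ * (A /ₘ B')) := by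
          conv_lhs => rw [← hmod]
          rw [hB'def]; ring
        calc φ A / φ B
            = (φ (A %ₘ B') + φ B * φ (C B.leadingCoeff⁻¹ * (A /ₘ B'))) / φ B := by
              rw [← map_mul, ← map_add, ← hA]
          _ = φ (A %ₘ B') / φ B + φ (C B.leadingCoeff⁻¹ * (A /ₘ B')) := by
              field_simp
    · obtain ⟨u, v, huv⟩ := hB
      set t := v * A with ht
      set s := u * A with hs
      have hA : A = s * B + t * derivative B := by
        rw [hs, ht]; linear_combination A * huv.symm
      have hcn : ((n : F)) ≠ 0 := Nat.cast_ne_zero.mpr (Nat.pos_iff_ne_zero.mp hn)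
      set c : F := (n : F)⁻¹ with hc
      set γ : K := φ (C c) with hγdef
      have hγ : γ * (n : K) = 1 := by
        rw [hγdef, ← map_natCast φ n, ← Polynomial.C_eq_natCast, ← map_mul, ← Polynomial.C_mul,
          hc, inv_mul_cancel₀ hcn, Polynomial.C_1, map_one]
      obtain ⟨r, g', hr, hEq⟩ := ih (s + C c * derivative t)
      set w : K := φ t / φ (B ^ n) with hw
      refine ⟨r, g' - γ * w, hr, ?_⟩
      have hφBn : φ (B ^ n) ≠ 0 := hφ0 _ (pow_ne_zero n hB0)
      have hDγ : D γ = 0 := by rw [hγdef, hDφ, derivative_C, map_zero]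
      have hDw : D w = (φ (derivative t) * φ (B ^ n)
          - φ t * ((n : K) * φ (B ^ (n - 1)) * φ (derivative B))) / (φ (B ^ n)) ^ 2 := by
        rw [hw, hD.div' _ _ hφBn, hDφ, hDφ, derivative_pow]
        congr 2
        push_cast [map_mul, map_natCast]
        ring
      obtain ⟨n', rfl⟩ : ∃ n', n = n' + 1 := ⟨n - 1, (Nat.succ_pred_eq_of_pos hn).symm⟩
      have hφBn' : φ (B ^ n') ≠ 0 := hφ0 _ (pow_ne_zero n' hB0)
      have hb01 : φ (B ^ (n' + 1)) = φ (B ^ n') * φ B := by rw [← map_mul, ← pow_succ]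
      have hγDw : γ * D w = γ * (φ (derivative t) / φ (B ^ (n' + 1)))
          - φ t * φ (derivative B) / φ (B ^ (n' + 1)) / φ B := by
        have h1 : γ * D w = γ * (φ (derivative t) / φ (B ^ (n' + 1)))
            - (γ * ((n' + 1 : ℕ) : K)) * (φ t * φ (derivative B) / φ (B ^ (n' + 1)) / φ B) := by
          rw [hDw]
          simp only [Nat.add_sub_cancel]
          rw [hb01]
          have hb : φ B ≠ 0 := hφB
          set b0 := φ (B ^ n') with hb0
          field_simp
        rw [h1, hγ, one_mul]
      have hDg' : D g' = φ (s + C c * derivative t) / φ (B ^ (n' + 1)) - φ r / φ B := by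
        rw [eq_sub_iff_add_eq, add_comm]; exact hEq.symm
      have hDtot : D (g' - γ * w) = D g' - γ * D w := by
        rw [hD.sub', hD.2, hDγ]; ring
      rw [hDtot, hDg', hγDw]
      have hφA : φ A = φ s * φ B + φ t * φ (derivative B) := by
        rw [hA]; push_cast [map_add, map_mul]; ring
      have hφsum : φ (s + C c * derivative t) = φ s + γ * φ (derivative t) := by
        simp [map_add, map_mul, hγdef]
      have hbb : φ (B ^ (n' + 1 + 1)) = φ (B ^ (n' + 1)) * φ B := by
        rw [← map_mul, ← pow_succ]
      rw [hφsum, hφA, hbb, hb01]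
      have haux : ∀ b0 b S T B' R γ' U : K, b ≠ 0 →
          (S * b + T * B') / (b0 * b * b) =
            R / b + ((S + γ' * U) / (b0 * b) - R / b
              - (γ' * (U / (b0 * b)) - T * B' / (b0 * b) / b)) := by
        intro b0 b S T B' R γ' U hb
        have h1 : (S * b + T * B') / (b0 * b * b) = S / (b0 * b) + T * B' / (b0 * b) / b := by
          rw [add_div, div_div]
          congr 1
          rw [mul_div_mul_right _ _ hb]
        rw [h1, mul_div_assoc, add_div]
        ring
      exact haux _ _ _ _ _ _ _ _ hφB

end Hermite

set_option synthInstance.maxHeartbeats 1000000 in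
theorem stmt_9 {k : Type*} [Field k] [CharZero k]
    (P Q : Polynomial (Polynomial k))
    (hP : P ≠ 0) (hQ : Q ≠ 0)
    (hPQdeg : P.degree < Q.degree)
    (hPQcop : IsRelPrime P Q)
    (hQprimY : Q.IsPrimitive)
    (m : ℕ) (hm : 0 < m) (q : Polynomial k) (Qi : ℕ → Polynomial (Polynomial k))
    (hfac : Q = Polynomial.C q * ∏ i ∈ Finset.range m, Qi i ^ (i + 1))
    (hQiprim : ∀ i < m, (Qi i).IsPrimitive)
    (hQisqf : ∀ i < m, Squarefree (Qi i))
    (hQicop : ∀ i < m, ∀ j < m, i ≠ j → IsRelPrime (Qi i) (Qi j))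
    (hQim : 0 < (Qi (m - 1)).natDegree)
    (Qs Qneg : Polynomial (Polynomial k))
    (hQs : Qs = ∏ i ∈ Finset.range m, Qi i)
    (hQneg : Q = Qs * Qneg)
    (Dy : RatFunc (RatFunc k) → RatFunc (RatFunc k)) (hDy : IsDeriv Dy)
    (hDyval : ∀ A : Polynomial (RatFunc k), Dy (kyToF A) = kyToF (Polynomial.derivative A))
    (Dx : RatFunc (RatFunc k) → RatFunc (RatFunc k)) (hDx : IsDeriv Dx)
    (hDxval : ∀ A : Polynomial (Polynomial k), Dx (toF A) = toF (derivX A)) :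
    (∃ ρ ≤ Qs.natDegree, ∃ η : Fin (ρ + 1) → RatFunc k, (∃ i, η i ≠ 0) ∧
      ∃ g : RatFunc (RatFunc k),
        ∑ i : Fin (ρ + 1), ratToF (η i) * Dx^[(i : ℕ)] (toF P / toF Q) = Dy g) ∧
    (∀ (ρ : ℕ) (η : Fin (ρ + 1) → RatFunc k), η (Fin.last ρ) ≠ 0 →
      (∃ g : RatFunc (RatFunc k),
        ∑ i : Fin (ρ + 1), ratToF (η i) * Dx^[(i : ℕ)] (toF P / toF Q) = Dy g) →
      (∀ (ρ' : ℕ) (η' : Fin (ρ' + 1) → RatFunc k), η' (Fin.last ρ') ≠ 0 →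
        (∃ g' : RatFunc (RatFunc k),
          ∑ i : Fin (ρ' + 1), ratToF (η' i) * Dx^[(i : ℕ)] (toF P / toF Q) = Dy g') →
        ρ ≤ ρ') →
      ρ ≤ Qs.natDegree) := by
  classical
  haveI : CharZero (RatFunc k) :=
    charZero_of_injective_algebraMap (RatFunc.algebraMap_injective k)
  suffices h : ∃ ρ ≤ Qs.natDegree, ∃ η : Fin (ρ + 1) → RatFunc k, η (Fin.last ρ) ≠ 0 ∧
      ∃ g : RatFunc (RatFunc k),
        ∑ i : Fin (ρ + 1), ratToF (η i) * Dx^[(i : ℕ)] (toF P / toF Q) = Dy g by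
    obtain ⟨ρ₀, hρ₀, η₀, hη₀, g₀, hg₀⟩ := h
    constructor
    · exact ⟨ρ₀, hρ₀, η₀, ⟨Fin.last ρ₀, hη₀⟩, g₀, hg₀⟩
    · intro ρ η hlast htel hmin
      exact le_trans (hmin ρ₀ η₀ hη₀ ⟨g₀, hg₀⟩) hρ₀
  -- injectivity facts
  have hkxF : Function.Injective (algebraMap (Polynomial k) (RatFunc k)) :=
    RatFunc.algebraMap_injective k
  have htoKy_inj : Function.Injective (toKy (k := k)) := fun a b h =>
    Polynomial.map_injective _ hkxF h
  have hky_inj : Function.Injective (kyToF (k := k)) :=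
    IsFractionRing.injective (Polynomial (RatFunc k)) (RatFunc (RatFunc k))
  have htoF_eq : ∀ p : Polynomial (Polynomial k), toF p = kyToF (toKy p) := fun _ => rfl
  have htoF_inj : Function.Injective (toF (k := k)) := fun a b h =>
    htoKy_inj (hky_inj (by rw [← htoF_eq, ← htoF_eq]; exact h))
  -- basic nonvanishing facts
  have hQi0 : ∀ i ∈ Finset.range m, Qi i ≠ 0 := fun i hi =>
    (hQisqf i (Finset.mem_range.mp hi)).ne_zero
  have hQs0 : Qs ≠ 0 := by rw [hQs]; exact Finset.prod_ne_zero_iff.mpr hQi0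
  have hd0 : 0 < Qs.natDegree := by
    rw [hQs, Polynomial.natDegree_prod _ _ hQi0]
    have hmem : m - 1 ∈ Finset.range m := Finset.mem_range.mpr (by omega)
    calc 0 < (Qi (m - 1)).natDegree := hQim
      _ ≤ _ := Finset.single_le_sum (f := fun i => (Qi i).natDegree)
        (fun i _ => Nat.zero_le _) hmem
  have hq0 : q ≠ 0 := by
    rintro rfl
    rw [map_zero, zero_mul] at hfac
    exact hQ hfac
  -- primitivity and squarefreeness of Qs, transferred to k(x)[y]
  have hQsprim : Qs.IsPrimitive := by
    rw [hQs]
    exact Finset.prod_induction Qi Polynomial.IsPrimitive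
      (fun a b ha hb => ha.mul hb) Polynomial.isPrimitive_one
      (fun i hi => hQiprim i (Finset.mem_range.mp hi))
  have hQssqf : Squarefree Qs := by
    rw [hQs]
    have key : ∀ s : Finset ℕ, s ⊆ Finset.range m → Squarefree (∏ i ∈ s, Qi i) := by
      intro s
      induction s using Finset.induction with
      | empty => intro _; simpa using squarefree_one
      | @insert a s ha ih =>
        intro hsub
        have hamem : a < m := Finset.mem_range.mp (hsub (Finset.mem_insert_self a s))
        have hsub' : s ⊆ Finset.range m := fun x hx => hsub (Finset.mem_insert_of_mem hx)
        rw [Finset.prod_insert ha]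
        refine squarefree_mul_iff.mpr ⟨?_, hQisqf a hamem, ih hsub'⟩
        exact IsRelPrime.prod_right fun j hj =>
          hQicop a hamem j (Finset.mem_range.mp (hsub' hj)) (fun h => ha (h ▸ hj))
    exact key _ subset_rfl
  have hBssqf : Squarefree (toKy (k := k) Qs) := squarefree_map_fraction hQsprim hQssqf
  have hBsep : IsCoprime (toKy (k := k) Qs) (Polynomial.derivative (toKy (k := k) Qs)) :=
    PerfectField.separable_iff_squarefree.mpr hBssqf
  have hdeg_eq : (toKy (k := k) Qs).natDegree = Qs.natDegree :=
    Polynomial.natDegree_map_eq_of_injective hkxF Qs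
  have hBsd : 0 < (toKy (k := k) Qs).natDegree := by rw [hdeg_eq]; exact hd0
  have hBs0 : toKy (k := k) Qs ≠ 0 := fun h => hQs0 (htoKy_inj (by rw [map_zero]; exact h))
  have hBsN : ∀ N : ℕ, kyToF ((toKy (k := k) Qs) ^ N) ≠ 0 := fun N h =>
    pow_ne_zero N hBs0 (hky_inj (by rw [map_zero]; exact h))
  have hQF0 : toF (k := k) Q ≠ 0 := fun h => hQ (htoF_inj (by rw [map_zero]; exact h))
  -- the cofactor R with Q * R = C q * Qs ^ m
  set Rp : Polynomial (Polynomial k) := ∏ i ∈ Finset.range m, Qi i ^ (m - 1 - i) with hRp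
  have hQR : Q * Rp = Polynomial.C q * Qs ^ m := by
    rw [hfac, hQs, ← Finset.prod_pow, hRp, mul_assoc, ← Finset.prod_mul_distrib]
    congr 1
    refine Finset.prod_congr rfl fun i hi => ?_
    rw [← pow_add]
    congr 1
    have := Finset.mem_range.mp hi
    omega
  set qF : RatFunc k := algebraMap (Polynomial k) (RatFunc k) q with hqF
  have hqF0 : qF ≠ 0 := fun h => hq0 (hkxF (by rw [map_zero]; exact h))
  -- the i-th derivative of f is Pi / Q^(i+1)
  have hDxf : ∀ i : ℕ, ∃ Pi : Polynomial (Polynomial k),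
      Dx^[i] (toF P / toF Q) = toF Pi / (toF Q) ^ (i + 1) := by
    intro i
    induction i with
    | zero => exact ⟨P, by simp⟩
    | succ i ih =>
      obtain ⟨Pi, hPi⟩ := ih
      refine ⟨derivX Pi * Q - (((i + 1 : ℕ) : Polynomial (Polynomial k)) * (Pi * derivX Q)), ?_⟩
      rw [Function.iterate_succ_apply', hPi]
      have hpow : (toF (k := k) Q) ^ (i + 1) ≠ 0 := pow_ne_zero _ hQF0
      rw [hDx.div' _ _ hpow, hDxval, hDx.pow', hDxval]
      rw [map_sub, map_mul, map_mul, map_mul, map_natCast]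
      rw [div_eq_div_iff (pow_ne_zero _ (pow_ne_zero _ hQF0)) (pow_ne_zero _ hQF0)]
      push_cast
      ring
  -- rewrite Pi / Q^(i+1) with denominator a power of Qs
  have hkey : ∀ (i : ℕ) (Pi : Polynomial (Polynomial k)),
      toF Pi / (toF Q) ^ (i + 1) =
        kyToF (Polynomial.C (qF⁻¹ ^ (i + 1)) * toKy (Pi * Rp ^ (i + 1))) /
          kyToF ((toKy (k := k) Qs) ^ (m * (i + 1))) := by
    intro i Pi
    rw [div_eq_div_iff (pow_ne_zero _ hQF0) (hBsN _)]
    have e1 : toF (k := k) ((Q * Rp) ^ (i + 1)) =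
        toF ((Polynomial.C q) ^ (i + 1)) * kyToF ((toKy (k := k) Qs) ^ (m * (i + 1))) := by
      rw [hQR, mul_pow, ← pow_mul, map_mul, htoF_eq (Qs ^ (m * (i + 1))),
        map_pow (toKy (k := k)) Qs (m * (i + 1))]
    have e2 : kyToF (k := k) (Polynomial.C (qF⁻¹ ^ (i + 1))) *
        toF ((Polynomial.C q) ^ (i + 1)) = 1 := by
      have hCq : toKy (k := k) (Polynomial.C q) = Polynomial.C qF := by
        simp [toKy, hqF]
      have h1 : toF (k := k) ((Polynomial.C q) ^ (i + 1)) =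
          kyToF (Polynomial.C (qF ^ (i + 1))) := by
        rw [htoF_eq, map_pow (toKy (k := k)), hCq, ← Polynomial.C_pow]
      rw [h1, ← map_mul, ← Polynomial.C_mul, ← mul_pow, inv_mul_cancel₀ hqF0, one_pow,
        Polynomial.C_1, map_one]
    calc toF Pi * kyToF ((toKy (k := k) Qs) ^ (m * (i + 1)))
        = (kyToF (Polynomial.C (qF⁻¹ ^ (i + 1))) * toF ((Polynomial.C q) ^ (i + 1))) *
            (toF Pi * kyToF ((toKy (k := k) Qs) ^ (m * (i + 1)))) := by rw [e2, one_mul]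
      _ = kyToF (Polynomial.C (qF⁻¹ ^ (i + 1))) * toF Pi * toF ((Q * Rp) ^ (i + 1)) := by
          rw [e1]; ring
      _ = kyToF (Polynomial.C (qF⁻¹ ^ (i + 1)) * toKy (Pi * Rp ^ (i + 1))) *
            (toF Q) ^ (i + 1) := by
          rw [mul_pow Q Rp, map_mul (kyToF (k := k)), ← htoF_eq (Pi * Rp ^ (i + 1)),
            map_mul (toF (k := k)) Pi (Rp ^ (i + 1)),
            map_mul (toF (k := k)) (Q ^ (i + 1)) (Rp ^ (i + 1)),
            map_pow (toF (k := k)) Q (i + 1)]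
          ring
  -- Hermite reduction of each derivative
  have hred : ∀ i : ℕ, ∃ (r : Polynomial (RatFunc k)) (g : RatFunc (RatFunc k)),
      r.natDegree < Qs.natDegree ∧
        Dx^[i] (toF P / toF Q) = kyToF r / kyToF (toKy (k := k) Qs) + Dy g := by
    intro i
    obtain ⟨Pi, hPi⟩ := hDxf i
    obtain ⟨r, g, hr, heq⟩ := hermite_reduction kyToF hky_inj Dy hDy hDyval
      (toKy (k := k) Qs) hBsep hBsd (m * (i + 1))
      (Polynomial.C (qF⁻¹ ^ (i + 1)) * toKy (Pi * Rp ^ (i + 1)))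
    exact ⟨r, g, hdeg_eq ▸ hr, by rw [hPi, hkey i Pi, heq]⟩
  choose r g hrdeg hrval using hred
  set d := Qs.natDegree with hdd
  -- linear dependence of the reduced forms
  have hnli : ¬ LinearIndependent (RatFunc k)
      (fun i : Fin (d + 1) => fun j : Fin d => (r i).coeff j) := by
    intro h
    have hcard := h.fintype_card_le_finrank
    rw [Module.finrank_fin_fun, Fintype.card_fin] at hcard
    omega
  obtain ⟨η, hsum0, i₀, hi₀⟩ := Fintype.not_linearIndependent_iff.mp hnli
  have hS : (∑ i : Fin (d + 1), Polynomial.C (η i) * r i) = 0 := by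
    apply Polynomial.ext
    intro j
    rw [Polynomial.finset_sum_coeff]
    simp only [Polynomial.coeff_C_mul, Polynomial.coeff_zero]
    rcases lt_or_ge j d with hj | hj
    · have := congrFun hsum0 ⟨j, hj⟩
      simpa [Finset.sum_apply] using this
    · exact Finset.sum_eq_zero fun i _ => by
        rw [Polynomial.coeff_eq_zero_of_natDegree_lt (lt_of_lt_of_le (hrdeg i) hj), mul_zero]
  have hDyconst : ∀ c : RatFunc k, Dy (ratToF c) = 0 := fun c => by
    rw [show ratToF (k := k) c = kyToF (Polynomial.C c) from rfl, hDyval,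
      Polynomial.derivative_C, map_zero]
  have hmaster : ∑ i : Fin (d + 1), ratToF (η i) * Dx^[(i : ℕ)] (toF P / toF Q) =
      Dy (∑ i : Fin (d + 1), ratToF (η i) * g i) := by
    have step1 : ∀ i : Fin (d + 1),
        ratToF (η i) * Dx^[(i : ℕ)] (toF P / toF Q) =
          kyToF (Polynomial.C (η i) * r i) / kyToF (toKy (k := k) Qs)
            + Dy (ratToF (η i) * g i) := by
      intro i
      rw [hrval i, mul_add]
      congr 1
      · rw [map_mul, show ratToF (k := k) (η i) = kyToF (Polynomial.C (η i)) from rfl,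
          mul_div_assoc]
      · exact (by rw [hDy.2, hDyconst (η i), mul_zero, add_zero] :
          Dy (ratToF (η i) * g (i : ℕ)) = ratToF (η i) * Dy (g (i : ℕ))).symm
    calc ∑ i : Fin (d + 1), ratToF (η i) * Dx^[(i : ℕ)] (toF P / toF Q)
        = ∑ i : Fin (d + 1), (kyToF (Polynomial.C (η i) * r i) / kyToF (toKy (k := k) Qs)
            + Dy (ratToF (η i) * g i)) := Finset.sum_congr rfl fun i _ => step1 i
      _ = (∑ i : Fin (d + 1), kyToF (Polynomial.C (η i) * r i)) / kyToF (toKy (k := k) Qs)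
            + ∑ i : Fin (d + 1), Dy (ratToF (η i) * g i) := by
          rw [Finset.sum_add_distrib, Finset.sum_div]
      _ = Dy (∑ i : Fin (d + 1), ratToF (η i) * g i) := by
          rw [← map_sum, hS, map_zero, zero_div, zero_add, ← hDy.sum']
  -- trim to the largest nonzero coefficient
  have hTne : (Finset.univ.filter (fun i : Fin (d + 1) => η i ≠ 0)).Nonempty :=
    ⟨i₀, by simp [hi₀]⟩
  set jm := (Finset.univ.filter (fun i : Fin (d + 1) => η i ≠ 0)).max' hTne with hjm
  have hjm0 : η jm ≠ 0 := by
    have h := Finset.max'_mem _ hTne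
    exact (Finset.mem_filter.mp h).2
  have hle : ∀ i : Fin (d + 1), η i ≠ 0 → i ≤ jm := fun i hi =>
    Finset.le_max' _ i (by simp [hi])
  set Φ : ℕ → RatFunc (RatFunc k) := fun i =>
    if h : i < d + 1 then ratToF (η ⟨i, h⟩) * Dx^[i] (toF P / toF Q) else 0 with hΦ
  have hΦbig : ∑ i : Fin (d + 1), ratToF (η i) * Dx^[(i : ℕ)] (toF P / toF Q)
      = ∑ i ∈ Finset.range (d + 1), Φ i := by
    rw [← Fin.sum_univ_eq_sum_range]
    refine Finset.sum_congr rfl fun i _ => ?_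
    rw [hΦ]
    simp only [dif_pos i.isLt, Fin.eta]
  have hjmd : (jm : ℕ) ≤ d := Nat.lt_succ_iff.mp jm.isLt
  have hΦsmall : ∑ i ∈ Finset.range ((jm : ℕ) + 1), Φ i = ∑ i ∈ Finset.range (d + 1), Φ i := by
    refine Finset.sum_subset (Finset.range_subset_range.mpr (by omega)) fun x hx hnx => ?_
    have hxd : x < d + 1 := Finset.mem_range.mp hx
    have hxj : ¬ x < (jm : ℕ) + 1 := fun h => hnx (Finset.mem_range.mpr h)
    have hzero : η ⟨x, hxd⟩ = 0 := by
      by_contra hne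
      have hxle : x ≤ (jm : ℕ) := Fin.le_def.mp (hle ⟨x, hxd⟩ hne)
      omega
    rw [hΦ]
    simp only [dif_pos hxd, hzero, map_zero, zero_mul]
  refine ⟨(jm : ℕ), hjmd, fun i => η (Fin.castLE (by omega) i), ?_, ?_⟩
  · show η (Fin.castLE (by omega) (Fin.last (jm : ℕ))) ≠ 0
    have hcast : Fin.castLE (by omega : (jm : ℕ) + 1 ≤ d + 1) (Fin.last (jm : ℕ)) = jm :=
      Fin.ext rfl
    rw [hcast]
    exact hjm0
  · refine ⟨∑ i : Fin (d + 1), ratToF (η i) * g i, ?_⟩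
    have hΦsm : ∑ i : Fin ((jm : ℕ) + 1),
        ratToF (η (Fin.castLE (by omega : (jm : ℕ) + 1 ≤ d + 1) i)) *
          Dx^[(i : ℕ)] (toF P / toF Q)
        = ∑ i ∈ Finset.range ((jm : ℕ) + 1), Φ i := by
      rw [← Fin.sum_univ_eq_sum_range]
      refine Finset.sum_congr rfl fun i _ => ?_
      rw [hΦ]
      have hi : (i : ℕ) < d + 1 := by omega
      simp only [dif_pos hi]
      rfl
    rw [hΦsm, hΦsmall, ← hΦbig, hmaster]
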